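/- Let m and M be respectively the infimum and the supremum of n(Pₙ(ω)V) over all n ∈ ℕ and ω ∈ S^ℕ, and let M_V be the 2×2 matrix with columns (m, 1−m) and (M, 1−M). If for every ω ∈ S^ℕ one has d_columns(Pₙ(ω)M_V) → 0 as n → ∞, then the sequence of maps ω ↦ N(Pₙ(ω)V) converges uniformly on S^ℕ. -/

import Mathlib

open Matrix Filter

/-- A 2×2 real matrix is nonnegative and column-allowable. -/
def ColAllowable (A : Matrix (Fin 2) (Fin 2) ℝ) : Prop :=
  (∀ i j, 0 ≤ A i j) ∧ 0 < A 0 0 + A 1 0 ∧ 0 < A 0 1 + A 1 1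

/-- The distance between the (normalized) columns of `A`. -/
noncomputable def dcols (A : Matrix (Fin 2) (Fin 2) ℝ) : ℝ :=
  |A.det| / ((A 0 0 + A 1 0) * (A 0 1 + A 1 1))

/-- `n(X) = x₁/(x₁+x₂)`. -/
noncomputable def nv (X : Fin 2 → ℝ) : ℝ := X 0 / (X 0 + X 1)

/-- The normalized vector `N(X)`. -/
noncomputable def Nv (X : Fin 2 → ℝ) : Fin 2 → ℝ := ![nv X, 1 - nv X]

/-- `Pₙ(ω) = M_{ω₁} M_{ω₂} ⋯ M_{ωₙ}`. -/
def Pprod {s : ℕ} (M : Fin s → Matrix (Fin 2) (Fin 2) ℝ) (ω : ℕ → Fin s) (n : ℕ) :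
    Matrix (Fin 2) (Fin 2) ℝ :=
  ((List.range n).map (fun i => M (ω i))).prod

/- ### Auxiliary lemmas -/

lemma core_pos (a b c d w0 w1 : ℝ) (hb : 0 ≤ b) (hd : 0 ≤ d)
    (hac : 0 < a + c) (hbd : 0 < b + d) (hw0 : 0 ≤ w0) (hw1 : 0 ≤ w1) (hw : 0 < w0 + w1) :
    0 < a * w0 + b * w1 + (c * w0 + d * w1) := by
  rcases lt_or_ge 0 w0 with hp | hp
  · nlinarith [mul_pos hac hp, mul_nonneg hbd.le hw1]
  · have h0 : w0 = 0 := le_antisymm hp hw0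
    subst h0
    have h1 : 0 < w1 := by linarith
    nlinarith [mul_pos hbd h1]

lemma mulVec_entries (A : Matrix (Fin 2) (Fin 2) ℝ) (hA : ColAllowable A)
    (W : Fin 2 → ℝ) (hW0 : 0 ≤ W 0) (hW1 : 0 ≤ W 1) (hWs : 0 < W 0 + W 1) :
    0 ≤ A.mulVec W 0 ∧ 0 ≤ A.mulVec W 1 ∧ 0 < A.mulVec W 0 + A.mulVec W 1 := by
  obtain ⟨hnn, h0, h1⟩ := hA
  simp only [Matrix.mulVec, dotProduct, Fin.sum_univ_two]
  exact ⟨add_nonneg (mul_nonneg (hnn 0 0) hW0) (mul_nonneg (hnn 0 1) hW1),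
    add_nonneg (mul_nonneg (hnn 1 0) hW0) (mul_nonneg (hnn 1 1) hW1),
    core_pos _ _ _ _ _ _ (hnn 0 1) (hnn 1 1) h0 h1 hW0 hW1 hWs⟩

lemma nv_mem_Icc (X : Fin 2 → ℝ) (hX0 : 0 ≤ X 0) (hX1 : 0 ≤ X 1) (hXs : 0 < X 0 + X 1) :
    nv X ∈ Set.Icc (0:ℝ) 1 := by
  constructor
  · exact div_nonneg hX0 hXs.le
  · rw [nv, div_le_one hXs]; linarith

lemma colAllowable_one : ColAllowable 1 := by
  refine ⟨fun i j => ?_, by norm_num, by norm_num⟩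
  fin_cases i <;> fin_cases j <;> norm_num

lemma colAllowable_mul {A B : Matrix (Fin 2) (Fin 2) ℝ}
    (hA : ColAllowable A) (hB : ColAllowable B) : ColAllowable (A * B) := by
  obtain ⟨hAnn, hA0, hA1⟩ := hA
  obtain ⟨hBnn, hB0, hB1⟩ := hB
  refine ⟨fun i j => ?_, ?_, ?_⟩
  · simp only [Matrix.mul_apply, Fin.sum_univ_two]
    exact add_nonneg (mul_nonneg (hAnn i 0) (hBnn 0 j)) (mul_nonneg (hAnn i 1) (hBnn 1 j))
  · simp only [Matrix.mul_apply, Fin.sum_univ_two]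
    exact core_pos _ _ _ _ _ _ (hAnn 0 1) (hAnn 1 1) hA0 hA1 (hBnn 0 0) (hBnn 1 0) hB0
  · simp only [Matrix.mul_apply, Fin.sum_univ_two]
    exact core_pos _ _ _ _ _ _ (hAnn 0 1) (hAnn 1 1) hA0 hA1 (hBnn 0 1) (hBnn 1 1) hB1

lemma Pprod_zero {s : ℕ} (M : Fin s → Matrix (Fin 2) (Fin 2) ℝ) (ω : ℕ → Fin s) :
    Pprod M ω 0 = 1 := by simp [Pprod]

lemma Pprod_succ {s : ℕ} (M : Fin s → Matrix (Fin 2) (Fin 2) ℝ) (ω : ℕ → Fin s) (n : ℕ) :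
    Pprod M ω (n + 1) = Pprod M ω n * M (ω n) := by
  simp [Pprod, List.range_succ]

lemma Pprod_allowable {s : ℕ} (M : Fin s → Matrix (Fin 2) (Fin 2) ℝ)
    (hM : ∀ k, ColAllowable (M k)) (ω : ℕ → Fin s) (n : ℕ) :
    ColAllowable (Pprod M ω n) := by
  induction n with
  | zero => simpa [Pprod_zero] using colAllowable_one
  | succ n ih => rw [Pprod_succ]; exact colAllowable_mul ih (hM (ω n))

lemma Pprod_add {s : ℕ} (M : Fin s → Matrix (Fin 2) (Fin 2) ℝ) (ω : ℕ → Fin s) (p k : ℕ) :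
    Pprod M ω (p + k) = Pprod M ω p * Pprod M (fun i => ω (p + i)) k := by
  simp only [Pprod, List.range_add, List.map_append, List.prod_append, List.map_map]
  rfl

lemma Pprod_congr {s : ℕ} (M : Fin s → Matrix (Fin 2) (Fin 2) ℝ) {ω ω' : ℕ → Fin s} {p : ℕ}
    (h : ∀ i < p, ω i = ω' i) : Pprod M ω p = Pprod M ω' p := by
  unfold Pprod
  congr 1
  apply List.map_congr_left
  intro a ha
  rw [h a (List.mem_range.1 ha)]

/-- Monotone Möbius-type inequality. -/
lemma moeb_le (a b c d u0 u1 v0 v1 : ℝ)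
    (hDu : 0 < a * u0 + b * u1 + (c * u0 + d * u1))
    (hDv : 0 < a * v0 + b * v1 + (c * v0 + d * v1))
    (hkey : 0 ≤ (a * d - b * c) * (u0 * v1 - u1 * v0)) :
    (a * v0 + b * v1) / (a * v0 + b * v1 + (c * v0 + d * v1)) ≤
      (a * u0 + b * u1) / (a * u0 + b * u1 + (c * u0 + d * u1)) := by
  rw [div_le_div_iff₀ hDv hDu]
  nlinarith [hkey]

lemma abs_sub_le_of_mem_uIcc {x y a b : ℝ} (hx : x ∈ Set.uIcc a b) (hy : y ∈ Set.uIcc a b) :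
    |x - y| ≤ |a - b| := by
  rw [Set.mem_uIcc] at hx hy
  rcases abs_cases (a - b) with ⟨e, he⟩ | ⟨e, he⟩ <;> rw [abs_sub_le_iff, e] <;>
    rcases hx with ⟨h1, h2⟩ | ⟨h1, h2⟩ <;> rcases hy with ⟨h3, h4⟩ | ⟨h3, h4⟩ <;>
    exact ⟨by linarith, by linarith⟩

/-- The normalized image of a vector whose slope is between `m` and `Ms` lies between the
normalized images of the corresponding extremal vectors. -/
lemma nv_mem_uIcc (A : Matrix (Fin 2) (Fin 2) ℝ) (hA : ColAllowable A)
    (m Ms : ℝ) (hm0 : 0 ≤ m) (hmM : m ≤ Ms) (hM1 : Ms ≤ 1)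
    (W : Fin 2 → ℝ) (hW0 : 0 ≤ W 0) (hW1 : 0 ≤ W 1) (hWs : 0 < W 0 + W 1)
    (hWm : m ≤ nv W) (hWM : nv W ≤ Ms) :
    nv (A.mulVec W) ∈ Set.uIcc (nv (A.mulVec ![m, 1 - m])) (nv (A.mulVec ![Ms, 1 - Ms])) := by
  obtain ⟨hnn, h0, h1⟩ := hA
  have hm1 : m ≤ 1 := le_trans hmM hM1
  have hM0 : 0 ≤ Ms := le_trans hm0 hmM
  have hDm : 0 < A 0 0 * m + A 0 1 * (1 - m) + (A 1 0 * m + A 1 1 * (1 - m)) :=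
    core_pos _ _ _ _ _ _ (hnn 0 1) (hnn 1 1) h0 h1 hm0 (by linarith) (by linarith)
  have hDM : 0 < A 0 0 * Ms + A 0 1 * (1 - Ms) + (A 1 0 * Ms + A 1 1 * (1 - Ms)) :=
    core_pos _ _ _ _ _ _ (hnn 0 1) (hnn 1 1) h0 h1 hM0 (by linarith) (by linarith)
  have hDW : 0 < A 0 0 * W 0 + A 0 1 * W 1 + (A 1 0 * W 0 + A 1 1 * W 1) :=
    core_pos _ _ _ _ _ _ (hnn 0 1) (hnn 1 1) h0 h1 hW0 hW1 hWs
  have hlow : m * (W 0 + W 1) ≤ W 0 := by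
    rw [nv, le_div_iff₀ hWs] at hWm; linarith
  have hhigh : W 0 ≤ Ms * (W 0 + W 1) := by
    rw [nv, div_le_iff₀ hWs] at hWM; linarith
  simp only [nv, Matrix.mulVec, dotProduct, Fin.sum_univ_two,
    Matrix.cons_val_zero, Matrix.cons_val_one, Matrix.head_cons]
  rcases le_or_gt 0 (A 0 0 * A 1 1 - A 0 1 * A 1 0) with hdet | hdet
  · rw [Set.mem_uIcc]
    left
    constructor
    · exact moeb_le _ _ _ _ _ _ _ _ hDW hDm (by nlinarith)
    · exact moeb_le _ _ _ _ _ _ _ _ hDM hDW (by nlinarith)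
  · rw [Set.mem_uIcc]
    right
    constructor
    · exact moeb_le _ _ _ _ _ _ _ _ hDW hDM (by nlinarith)
    · exact moeb_le _ _ _ _ _ _ _ _ hDm hDW (by nlinarith)

/-- Key contraction bound. -/
lemma key_bound (A : Matrix (Fin 2) (Fin 2) ℝ) (hA : ColAllowable A)
    (m Ms : ℝ) (hm0 : 0 ≤ m) (hmM : m ≤ Ms) (hM1 : Ms ≤ 1)
    (W W' : Fin 2 → ℝ)
    (hW0 : 0 ≤ W 0) (hW1 : 0 ≤ W 1) (hWs : 0 < W 0 + W 1)
    (hWm : m ≤ nv W) (hWM : nv W ≤ Ms)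
    (hW0' : 0 ≤ W' 0) (hW1' : 0 ≤ W' 1) (hWs' : 0 < W' 0 + W' 1)
    (hWm' : m ≤ nv W') (hWM' : nv W' ≤ Ms) :
    |nv (A.mulVec W) - nv (A.mulVec W')| ≤ dcols (A * !![m, Ms; 1 - m, 1 - Ms]) := by
  have hu := nv_mem_uIcc A hA m Ms hm0 hmM hM1 W hW0 hW1 hWs hWm hWM
  have hu' := nv_mem_uIcc A hA m Ms hm0 hmM hM1 W' hW0' hW1' hWs' hWm' hWM'
  refine le_trans (abs_sub_le_of_mem_uIcc hu hu') (le_of_eq ?_)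
  obtain ⟨hnn, h0, h1⟩ := hA
  have hm1 : m ≤ 1 := le_trans hmM hM1
  have hM0 : 0 ≤ Ms := le_trans hm0 hmM
  have hDm : 0 < A 0 0 * m + A 0 1 * (1 - m) + (A 1 0 * m + A 1 1 * (1 - m)) :=
    core_pos _ _ _ _ _ _ (hnn 0 1) (hnn 1 1) h0 h1 hm0 (by linarith) (by linarith)
  have hDM : 0 < A 0 0 * Ms + A 0 1 * (1 - Ms) + (A 1 0 * Ms + A 1 1 * (1 - Ms)) :=
    core_pos _ _ _ _ _ _ (hnn 0 1) (hnn 1 1) h0 h1 hM0 (by linarith) (by linarith)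
  simp only [nv, dcols, Matrix.mulVec, dotProduct, Fin.sum_univ_two,
    Matrix.cons_val_zero, Matrix.cons_val_one, Matrix.head_cons, Matrix.mul_apply,
    Matrix.det_fin_two, Matrix.cons_val', Matrix.empty_val', Matrix.cons_val_fin_one,
    Matrix.head_fin_const]
  rw [div_sub_div _ _ (ne_of_gt hDm) (ne_of_gt hDM), abs_div,
    abs_of_pos (mul_pos hDm hDM)]
  congr 1
  · congr 1
    simp only [Matrix.cons_val', Matrix.cons_val_zero, Matrix.cons_val_one, Matrix.head_cons,
      Matrix.empty_val', Matrix.cons_val_fin_one, Matrix.head_fin_const, Matrix.of_apply]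
    ring


theorem stmt8 (s : ℕ) (M : Fin s → Matrix (Fin 2) (Fin 2) ℝ)
    (hM : ∀ k, ColAllowable (M k))
    (V : Fin 2 → ℝ) (hV : 0 < V 0 ∧ 0 < V 1)
    (m Msup : ℝ)
    (hm : IsGLB {x | ∃ n, 1 ≤ n ∧ ∃ ω : ℕ → Fin s,
      x = nv ((Pprod M ω n).mulVec V)} m)
    (hMsup : IsLUB {x | ∃ n, 1 ≤ n ∧ ∃ ω : ℕ → Fin s,
      x = nv ((Pprod M ω n).mulVec V)} Msup)
    (MV : Matrix (Fin 2) (Fin 2) ℝ)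
    (hMV : MV = !![m, Msup; 1 - m, 1 - Msup])
    (h : ∀ ω : ℕ → Fin s,
      Tendsto (fun n => dcols (Pprod M ω n * MV)) atTop (nhds 0)) :
    ∃ F : (ℕ → Fin s) → (Fin 2 → ℝ),
      TendstoUniformly (fun n ω => Nv ((Pprod M ω n).mulVec V)) F atTop := by
  rcases Nat.eq_zero_or_pos s with rfl | hs
  · refine ⟨fun _ => 0, fun u hu => Eventually.of_forall fun n ω => ?_⟩
    exact (ω 0).elim0
  -- the set of slopes
  set S : Set ℝ := {x | ∃ n, 1 ≤ n ∧ ∃ ω : ℕ → Fin s, x = nv ((Pprod M ω n).mulVec V)} with hS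
  -- basic facts about vectors P V
  have hPV : ∀ (ω : ℕ → Fin s) (n : ℕ),
      0 ≤ (Pprod M ω n).mulVec V 0 ∧ 0 ≤ (Pprod M ω n).mulVec V 1 ∧
        0 < (Pprod M ω n).mulVec V 0 + (Pprod M ω n).mulVec V 1 := fun ω n =>
    mulVec_entries _ (Pprod_allowable M hM ω n) V hV.1.le hV.2.le (by linarith [hV.1, hV.2])
  have hSsub : S ⊆ Set.Icc (0:ℝ) 1 := by
    rintro x ⟨n, hn, ω, rfl⟩
    exact nv_mem_Icc _ (hPV ω n).1 (hPV ω n).2.1 (hPV ω n).2.2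
  have hm0 : 0 ≤ m := hm.2 fun x hx => (hSsub hx).1
  have hM1 : Msup ≤ 1 := hMsup.2 fun x hx => (hSsub hx).2
  have hSne : (fun _ => (⟨0, hs⟩ : Fin s)) 0 = ⟨0, hs⟩ := rfl
  have hx0 : nv ((Pprod M (fun _ => (⟨0, hs⟩ : Fin s)) 1).mulVec V) ∈ S :=
    ⟨1, le_refl 1, _, rfl⟩
  have hmM : m ≤ Msup := le_trans (hm.1 hx0) (hMsup.1 hx0)
  -- main uniform Cauchy estimate
  have hcau : ∀ ε > (0:ℝ), ∃ N, ∀ n ≥ N, ∀ n' ≥ N, ∀ ω : ℕ → Fin s,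
      dist (Nv ((Pprod M ω n).mulVec V)) (Nv ((Pprod M ω n').mulVec V)) < ε := by
    intro ε hε
    -- choose, for each ω, a cutoff where dcols is small
    have hchoice : ∀ ω : ℕ → Fin s, ∃ p, 1 ≤ p ∧ dcols (Pprod M ω p * MV) < ε := by
      intro ω
      have := (h ω).eventually (eventually_lt_nhds hε) -- dcols < ε eventually? (0 < ε)
      obtain ⟨p, hp⟩ := ((this.and (eventually_ge_atTop 1)).exists)
      exact ⟨p, hp.2, hp.1⟩
    choose p hp1 hpε using hchoice
    -- cylinders
    set U : (ℕ → Fin s) → Set (ℕ → Fin s) :=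
      fun ω => {ω' | ∀ i < p ω, ω' i = ω i} with hU
    have hUopen : ∀ ω, IsOpen (U ω) := by
      intro ω
      have : U ω = ⋂ i ∈ Finset.range (p ω), (fun ω' : ℕ → Fin s => ω' i) ⁻¹' {ω i} := by
        ext ω'; simp [hU, Set.mem_iInter]
      rw [this]
      exact isOpen_biInter_finset fun i _ =>
        (continuous_apply i).isOpen_preimage _ (isOpen_discrete _)
    have hcover : (Set.univ : Set (ℕ → Fin s)) ⊆ ⋃ ω, U ω := fun ω _ =>
      Set.mem_iUnion.2 ⟨ω, fun i _ => rfl⟩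
    obtain ⟨t, ht⟩ := isCompact_univ.elim_finite_subcover U hUopen hcover
    refine ⟨(t.sup p) + 1, ?_⟩
    intro n hn n' hn' ω
    obtain ⟨ω₀, hω₀t, hωU⟩ := Set.mem_iUnion₂.1 (ht (Set.mem_univ ω))
    set q := p ω₀ with hq
    have hqle : q ≤ t.sup p := Finset.le_sup hω₀t
    have hqn : q < n := by omega
    have hqn' : q < n' := by omega
    have hdq : dcols (Pprod M ω q * MV) < ε := by
      rw [Pprod_congr M fun i hi => (hωU i hi : ω i = ω₀ i)]
      exact hpε ω₀
    -- decompose the products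
    have key : ∀ n'' > q, m ≤ nv ((Pprod M (fun i => ω (q + i)) (n'' - q)).mulVec V) ∧
        nv ((Pprod M (fun i => ω (q + i)) (n'' - q)).mulVec V) ≤ Msup ∧
        (Pprod M ω n'').mulVec V =
          (Pprod M ω q).mulVec ((Pprod M (fun i => ω (q + i)) (n'' - q)).mulVec V) := by
      intro n'' hn''
      have hmem : nv ((Pprod M (fun i => ω (q + i)) (n'' - q)).mulVec V) ∈ S :=
        ⟨n'' - q, by omega, _, rfl⟩
      refine ⟨hm.1 hmem, hMsup.1 hmem, ?_⟩
      conv_lhs => rw [show n'' = q + (n'' - q) by omega, Pprod_add]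
      exact (Matrix.mulVec_mulVec V _ _).symm
    obtain ⟨hm1, hM1', hsplit⟩ := key n hqn
    obtain ⟨hm2, hM2', hsplit'⟩ := key n' hqn'
    set W := (Pprod M (fun i => ω (q + i)) (n - q)).mulVec V with hW
    set W' := (Pprod M (fun i => ω (q + i)) (n' - q)).mulVec V with hW'
    have hWe := hPV (fun i => ω (q + i)) (n - q)
    have hWe' := hPV (fun i => ω (q + i)) (n' - q)
    have hkb := key_bound (Pprod M ω q) (Pprod_allowable M hM ω q) m Msup hm0 hmM hM1
      W W' hWe.1 hWe.2.1 hWe.2.2 hm1 hM1' hWe'.1 hWe'.2.1 hWe'.2.2 hm2 hM2'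
    rw [← hMV] at hkb
    have habs : |nv ((Pprod M ω n).mulVec V) - nv ((Pprod M ω n').mulVec V)| < ε := by
      rw [hsplit, hsplit']
      exact lt_of_le_of_lt hkb hdq
    -- convert to dist of Nv
    have hd : dist (Nv ((Pprod M ω n).mulVec V)) (Nv ((Pprod M ω n').mulVec V)) ≤
        |nv ((Pprod M ω n).mulVec V) - nv ((Pprod M ω n').mulVec V)| := by
      refine (dist_pi_le_iff (abs_nonneg _)).2 fun i => ?_
      fin_cases i
      · simp only [Nv, Real.dist_eq, Fin.zero_eta, Matrix.cons_val_zero]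
        exact le_refl _
      · simp only [Nv, Real.dist_eq, Fin.mk_one, Matrix.cons_val_one, Matrix.head_cons,
          Matrix.cons_val_zero]
        rw [show (1 - nv ((Pprod M ω n).mulVec V)) - (1 - nv ((Pprod M ω n').mulVec V)) =
          -(nv ((Pprod M ω n).mulVec V) - nv ((Pprod M ω n').mulVec V)) by ring, abs_neg]
    exact lt_of_le_of_lt hd habs
  -- uniform Cauchy, hence uniform convergence
  have hUC : UniformCauchySeqOn (fun n ω => Nv ((Pprod M ω n).mulVec V)) atTop Set.univ :=
    Metric.uniformCauchySeqOn_iff.2 fun ε hε => by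
      obtain ⟨N, hN⟩ := hcau ε hε
      exact ⟨N, fun a ha b hb x _ => hN a ha b hb x⟩
  have hptw : ∀ ω : ℕ → Fin s, ∃ L, Tendsto (fun n => Nv ((Pprod M ω n).mulVec V)) atTop (nhds L) := by
    intro ω
    apply cauchySeq_tendsto_of_complete
    rw [Metric.cauchySeq_iff]
    intro ε hε
    obtain ⟨N, hN⟩ := hcau ε hε
    exact ⟨N, fun a ha b hb => hN a ha b hb ω⟩
  choose F hF using hptw
  exact ⟨F, tendstoUniformlyOn_univ.1 (hUC.tendstoUniformlyOn_of_tendsto fun ω _ => hF ω)⟩
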